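/- Let P be the 3×3 integer matrix with columns (0,0,1), (0,1,1), (1,1,0), i.e. with rows (0,0,1), (0,1,1), (1,1,0). Then P is invertible and for every integer k ≥ 1 one has B₃(k)·P = P·Z₃(k), i.e. Z₃(k) = P⁻¹·B₃(k)·P. In particular, for every k ≥ 1 the matrices Z₃(k) and B₃(k) have the same characteristic polynomial and the same eigenvalues. -/
import Mathlib


/-- The matrix `B₃(k)` (over `ℤ`) with rows `(0, 1, 0)`, `(1, 0, 1)`, `(k−1, 0, k)`. -/
def B3 (k : ℤ) : Matrix (Fin 3) (Fin 3) ℤ :=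
  !![0, 1, 0; 1, 0, 1; k - 1, 0, k]

/-- The matrix `Z₃(k)` (over `ℤ`) with rows `(k−1, k, k−1)`, `(1, 0, 0)`, `(0, 1, 1)`. -/
def Z3 (k : ℤ) : Matrix (Fin 3) (Fin 3) ℤ :=
  !![k - 1, k, k - 1; 1, 0, 0; 0, 1, 1]

/-- The change-of-basis matrix `P` with rows `(0,0,1)`, `(0,1,1)`, `(1,1,0)`. -/
def P : Matrix (Fin 3) (Fin 3) ℤ :=
  !![0, 0, 1; 0, 1, 1; 1, 1, 0]

/-- `P` is invertible, conjugates `Z₃(k)` to `B₃(k)` for every `k ≥ 1`, and in particular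
`Z₃(k)` and `B₃(k)` have the same characteristic polynomial, hence the same eigenvalues. -/
theorem Z3_conjugate_B3 :
    IsUnit P ∧
    ∀ k : ℤ, 1 ≤ k →
      B3 k * P = P * Z3 k ∧
      Z3 k = P⁻¹ * B3 k * P ∧
      (Z3 k).charpoly = (B3 k).charpoly := by
  have hdet : IsUnit P.det := by
    simp [P, Matrix.det_fin_three]
  refine ⟨(Matrix.isUnit_iff_isUnit_det P).mpr hdet, fun k _ => ?_⟩
  have h1 : B3 k * P = P * Z3 k := by
    ext i j
    fin_cases i <;> fin_cases j <;>
      simp [B3, P, Z3, Matrix.mul_apply, Fin.sum_univ_three,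
        Matrix.vecHead, Matrix.vecTail] <;> ring
  refine ⟨h1, ?_, ?_⟩
  · rw [mul_assoc, h1, ← mul_assoc, Matrix.nonsing_inv_mul _ hdet, one_mul]
  · simp [Matrix.charpoly, Matrix.det_fin_three, Matrix.charmatrix_apply, Z3, B3,
      Matrix.one_apply, Matrix.vecHead, Matrix.vecTail]
    ring
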